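/- With the q-deformed Cartan–Weyl Jordan–Schwinger generators, for i ≠ j one has [E_{ij}, E_{ji}] = [N_i − N_j], where [A] = (q^A − q^{−A})/(q − q^{−1}). -/

import Mathlib

/-- Auxiliary commutative computation: the "q-number" commutator identity among
seven pairwise commuting elements. -/
private lemma stmt6_aux {A : Type*} [Ring A] (qA qA' la U Ui V Vi : A)
    (hq : ∀ a : A, qA * a = a * qA)
    (hq' : ∀ a : A, qA' * a = a * qA')
    (hla : ∀ a : A, la * a = a * la)
    (hUUi : U * Ui = Ui * U) (hUV : U * V = V * U) (hUVi : U * Vi = Vi * U)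
    (hUiV : Ui * V = V * Ui) (hUiVi : Ui * Vi = Vi * Ui) (hVVi : V * Vi = Vi * V)
    (hla1 : la * (qA - qA') = 1) :
    la * (la * ((qA * V - qA' * Vi) * (U - Ui)))
      - la * (la * ((qA * U - qA' * Ui) * (V - Vi)))
      = la * (U * Vi - V * Ui) := by
  set s : Set A := {qA, qA', la, U, Ui, V, Vi} with hs
  have hcomm : ∀ x ∈ s, ∀ y ∈ s, x * y = y * x := by
    intro a ha b hb
    simp only [hs, Set.mem_insert_iff, Set.mem_singleton_iff] at ha hb
    rcases ha with rfl|rfl|rfl|rfl|rfl|rfl|rfl <;>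
      rcases hb with rfl|rfl|rfl|rfl|rfl|rfl|rfl <;>
      first
        | rfl
        | exact hq _ | exact (hq _).symm
        | exact hq' _ | exact (hq' _).symm
        | exact hla _ | exact (hla _).symm
        | exact hUUi | exact hUUi.symm
        | exact hUV | exact hUV.symm
        | exact hUVi | exact hUVi.symm
        | exact hUiV | exact hUiV.symm
        | exact hUiVi | exact hUiVi.symm
        | exact hVVi | exact hVVi.symm
  letI : CommRing (Subring.closure s) := Subring.closureCommRingOfComm hcomm
  have mem : ∀ a ∈ s, a ∈ Subring.closure s := fun a ha => Subring.subset_closure ha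
  have hmq : qA ∈ Subring.closure s := mem _ (by simp [hs])
  have hmq' : qA' ∈ Subring.closure s := mem _ (by simp [hs])
  have hmla : la ∈ Subring.closure s := mem _ (by simp [hs])
  have hmU : U ∈ Subring.closure s := mem _ (by simp [hs])
  have hmUi : Ui ∈ Subring.closure s := mem _ (by simp [hs])
  have hmV : V ∈ Subring.closure s := mem _ (by simp [hs])
  have hmVi : Vi ∈ Subring.closure s := mem _ (by simp [hs])
  set Q : Subring.closure s := ⟨qA, hmq⟩
  set Q' : Subring.closure s := ⟨qA', hmq'⟩
  set L : Subring.closure s := ⟨la, hmla⟩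
  set u : Subring.closure s := ⟨U, hmU⟩
  set ui : Subring.closure s := ⟨Ui, hmUi⟩
  set v : Subring.closure s := ⟨V, hmV⟩
  set vi : Subring.closure s := ⟨Vi, hmVi⟩
  have hla1' : L * (Q - Q') = 1 := by
    apply Subtype.ext
    push_cast
    exact hla1
  have key : L * (L * ((Q * v - Q' * vi) * (u - ui)))
      - L * (L * ((Q * u - Q' * ui) * (v - vi)))
      = L * (u * vi - v * ui) := by
    linear_combination (L * (u * vi - v * ui)) * hla1'
  have := congrArg Subtype.val key
  push_cast at this
  exact this

theorem stmt_6 {A : Type*} [Ring A] (n : ℕ)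
    (q : Aˣ) (lamInv : A)
    (x qN : Fin (n + 1) → Aˣ)
    (qS : Finset (Fin (n + 1)) → Aˣ)
    (hq_central : ∀ a : A, (q : A) * a = a * (q : A))
    (hlam_central : ∀ a : A, lamInv * a = a * lamInv)
    (hlam : lamInv * ((q : A) - ((q⁻¹ : Aˣ) : A)) = 1)
    (hxx : ∀ i j, (x i : A) * (x j : A) = (x j : A) * (x i : A))
    (hNN : ∀ i j, (qN i : A) * (qN j : A) = (qN j : A) * (qN i : A))
    (hNx : ∀ i j, (qN i : A) * (x j : A)
      = (if i = j then (q : A) else 1) * ((x j : A) * (qN i : A)))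
    (hqS0 : qS ∅ = 1)
    (hqSi : ∀ (s : Finset (Fin (n + 1))) (t), t ∉ s → qS (insert t s) = qN t * qS s)
    (EJ E : Fin (n + 1) → Fin (n + 1) → A)
    (hEJ : ∀ i j, EJ i j
      = (x i : A) * (((x j)⁻¹ : Aˣ) : A)
          * (lamInv * ((qN j : A) - (((qN j)⁻¹ : Aˣ) : A))))
    (hElt : ∀ i j, i < j →
      E i j = (((qS (Finset.Ioo i j))⁻¹ : Aˣ) : A) * EJ i j)
    (hEgt : ∀ i j, j < i →
      E i j = ((qS (Finset.Ioo j i) : Aˣ) : A) * EJ i j)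
    (i j : Fin (n + 1)) (hij : i ≠ j) :
    E i j * E j i - E j i * E i j
      = lamInv * ((qN i : A) * (((qN j)⁻¹ : Aˣ) : A)
          - (qN j : A) * (((qN i)⁻¹ : Aˣ) : A)) := by
  -- basic commutation facts
  have hCq : ∀ a : A, Commute (q : A) a := hq_central
  have hCqi : ∀ a : A, Commute ((q⁻¹ : Aˣ) : A) a :=
    fun a => ((hCq a).symm.units_inv_right).symm
  have hlswap : ∀ y z : A, lamInv * (y * z) = y * (lamInv * z) := by
    intro y z; rw [← mul_assoc, hlam_central y, mul_assoc]
  have cancel : ∀ (u : Aˣ) (a b : A), ((u : A) * a = a * (u : A)) →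
      ((u⁻¹ : Aˣ) : A) * a * ((u : A) * b) = a * b := by
    intro u a b hc
    calc ((u⁻¹ : Aˣ) : A) * a * ((u : A) * b)
        = ((u⁻¹ : Aˣ) : A) * ((a * (u : A)) * b) := by simp only [mul_assoc]
      _ = ((u⁻¹ : Aˣ) : A) * (((u : A) * a) * b) := by rw [hc]
      _ = (((u⁻¹ : Aˣ) : A) * (u : A)) * (a * b) := by simp only [mul_assoc]
      _ = a * b := by rw [Units.inv_mul, one_mul]
  have cancel' : ∀ (u : Aˣ) (a b : A), ((u : A) * a = a * (u : A)) →
      (u : A) * a * (((u⁻¹ : Aˣ) : A) * b) = a * b := by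
    intro u a b hc
    calc (u : A) * a * (((u⁻¹ : Aˣ) : A) * b)
        = (u : A) * ((a * ((u⁻¹ : Aˣ) : A)) * b) := by simp only [mul_assoc]
      _ = (u : A) * ((((u⁻¹ : Aˣ) : A) * a) * b) := by
          rw [(Commute.units_inv_left (hc : Commute (u : A) a)).eq]
      _ = ((u : A) * ((u⁻¹ : Aˣ) : A)) * (a * b) := by simp only [mul_assoc]
      _ = a * b := by rw [Units.mul_inv, one_mul]
  have hClam : ∀ a : A, Commute lamInv a := hlam_central
  have hCNx : ∀ a b, a ≠ b → Commute (qN a : A) (x b : A) := by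
    intro a b hab
    have := hNx a b
    rw [if_neg hab, one_mul] at this
    exact this
  have hCNN : ∀ a b, Commute (qN a : A) (qN b : A) := fun a b => hNN a b
  -- the q-commutation of qN b with x b and its inverse form
  have hqx : ∀ b, (qN b : A) * (x b : A) = (q : A) * ((x b : A) * (qN b : A)) := by
    intro b; have := hNx b b; rwa [if_pos rfl] at this
  have hqxi : ∀ b, (((qN b)⁻¹ : Aˣ) : A) * (x b : A)
      = ((q⁻¹ : Aˣ) : A) * ((x b : A) * (((qN b)⁻¹ : Aˣ) : A)) := by
    intro b
    have hcan : (qN b : A) * ((((qN b)⁻¹ : Aˣ) : A) * (x b : A))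
        = (qN b : A) * (((q⁻¹ : Aˣ) : A) * ((x b : A) * (((qN b)⁻¹ : Aˣ) : A))) := by
      calc (qN b : A) * ((((qN b)⁻¹ : Aˣ) : A) * (x b : A))
          = (x b : A) := by rw [← mul_assoc, Units.mul_inv, one_mul]
        _ = ((q⁻¹ : Aˣ) : A) * ((q : A) * ((x b : A) * (qN b : A))) * (((qN b)⁻¹ : Aˣ) : A) := by
            rw [← mul_assoc ((q⁻¹ : Aˣ) : A), Units.inv_mul, one_mul, mul_assoc,
              Units.mul_inv, mul_one]
        _ = ((q⁻¹ : Aˣ) : A) * ((qN b : A) * (x b : A)) * (((qN b)⁻¹ : Aˣ) : A) := by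
            rw [hqx b]
        _ = (qN b : A) * (((q⁻¹ : Aˣ) : A) * ((x b : A) * (((qN b)⁻¹ : Aˣ) : A))) := by
            rw [← mul_assoc ((q⁻¹ : Aˣ) : A), (hCqi (qN b : A)).eq]
            simp only [mul_assoc]
    exact (Units.mul_right_inj (qN b)).mp hcan
  -- the key product formula for EJ
  have hprod : ∀ a b, a ≠ b → EJ a b * EJ b a
      = lamInv * (lamInv * (((q : A) * (qN b : A) - ((q⁻¹ : Aˣ) : A) * (((qN b)⁻¹ : Aˣ) : A))
          * ((qN a : A) - (((qN a)⁻¹ : Aˣ) : A)))) := by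
    intro a b hab
    have hba : b ≠ a := hab.symm
    set Xa : A := (x a : A) with hXa
    set Xai : A := (((x a)⁻¹ : Aˣ) : A) with hXai
    set Xb : A := (x b : A) with hXb
    set Xbi : A := (((x b)⁻¹ : Aˣ) : A) with hXbi
    set Qa : A := (qN a : A) with hQa
    set Qai : A := (((qN a)⁻¹ : Aˣ) : A) with hQai
    set Qb : A := (qN b : A) with hQb
    set Qbi : A := (((qN b)⁻¹ : Aˣ) : A) with hQbi
    set T : A := (q : A) * Qb - ((q⁻¹ : Aˣ) : A) * Qbi with hT
    have hQbXb : (Qb - Qbi) * Xb = Xb * T := by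
      rw [hT, sub_mul, hqx b, hqxi b, mul_sub]
      rw [← mul_assoc (q : A), (hCq Xb).eq, ← mul_assoc ((q⁻¹ : Aˣ) : A), (hCqi Xb).eq]
      simp only [mul_assoc]
      rfl
    have hQbXb' : ∀ z, (Qb - Qbi) * (Xb * z) = Xb * (T * z) := by
      intro z; rw [← mul_assoc, hQbXb, mul_assoc]
    have hCQbXa : Commute Qb Xa := hCNx b a hba
    have hCQbiXa : Commute Qbi Xa := hCQbXa.units_inv_left
    have hCQbXai : Commute Qb Xai := hCQbXa.units_inv_right
    have hCQbiXai : Commute Qbi Xai := hCQbiXa.units_inv_right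
    have hTXai : T * Xai = Xai * T := by
      rw [hT, sub_mul, mul_sub]
      rw [mul_assoc, hCQbXai.eq, ← mul_assoc (q : A), (hCq Xai).eq, mul_assoc]
      rw [mul_assoc ((q⁻¹ : Aˣ) : A), hCQbiXai.eq, ← mul_assoc ((q⁻¹ : Aˣ) : A),
        (hCqi Xai).eq, mul_assoc]
    have hTXai' : ∀ z, T * (Xai * z) = Xai * (T * z) := by
      intro z; rw [← mul_assoc, hTXai, mul_assoc]
    have hXbiXb : ∀ z : A, Xbi * (Xb * z) = z := by
      intro z; rw [← mul_assoc, hXbi, hXb, Units.inv_mul, one_mul]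
    have hXaXai : ∀ z : A, Xa * (Xai * z) = z := by
      intro z; rw [← mul_assoc, hXa, hXai, Units.mul_inv, one_mul]
    rw [hEJ, hEJ]
    simp only [← hXa, ← hXai, ← hXb, ← hXbi, ← hQa, ← hQai, ← hQb, ← hQbi]
    simp only [mul_assoc]
    rw [hQbXb', hTXai', hlswap Xb, hlswap Xai, hXbiXb, hXaXai, ← hlswap]
  -- the commutator of the EJ's
  have hkey : ∀ a b, a ≠ b → EJ a b * EJ b a - EJ b a * EJ a b
      = lamInv * ((qN a : A) * (((qN b)⁻¹ : Aˣ) : A) - (qN b : A) * (((qN a)⁻¹ : Aˣ) : A)) := by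
    intro a b hab
    rw [hprod a b hab, hprod b a hab.symm]
    have hCaai : Commute (qN a : A) (((qN a)⁻¹ : Aˣ) : A) :=
      (Commute.refl (qN a : A)).units_inv_right
    have hCbbi : Commute (qN b : A) (((qN b)⁻¹ : Aˣ) : A) :=
      (Commute.refl (qN b : A)).units_inv_right
    have hCab : Commute (qN a : A) (qN b : A) := hNN a b
    exact stmt6_aux (q : A) ((q⁻¹ : Aˣ) : A) lamInv
      (qN a : A) (((qN a)⁻¹ : Aˣ) : A) (qN b : A) (((qN b)⁻¹ : Aˣ) : A)
      hq_central (fun a => (hCqi a).eq) hlam_central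
      hCaai.eq hCab.eq hCab.units_inv_right.eq
      hCab.units_inv_left.eq (hCab.units_inv_left.units_inv_right).eq hCbbi.eq hlam
  -- the q^{sum} unit commutes with the relevant EJ's
  have hSEJ : ∀ (s : Finset (Fin (n + 1))), i ∉ s → j ∉ s →
      Commute ((qS s : Aˣ) : A) (EJ i j) ∧ Commute ((qS s : Aˣ) : A) (EJ j i) := by
    intro s
    induction s using Finset.induction_on with
    | empty => intro _ _; rw [hqS0]; exact ⟨Commute.one_left _, Commute.one_left _⟩
    | @insert t s hts ih =>
      intro hi hj
      have hti : t ≠ i := fun h => hi (h ▸ Finset.mem_insert_self t s)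
      have htj : t ≠ j := fun h => hj (h ▸ Finset.mem_insert_self t s)
      have hi' : i ∉ s := fun h => hi (Finset.mem_insert_of_mem h)
      have hj' : j ∉ s := fun h => hj (Finset.mem_insert_of_mem h)
      have hNtEJ : ∀ a b : Fin (n + 1), t ≠ a → t ≠ b → Commute (qN t : A) (EJ a b) := by
        intro a b hta htb
        rw [hEJ]
        exact ((hCNx t a hta).mul_right ((hCNx t b htb).units_inv_right)).mul_right
          (((hClam ((qN t : A))).symm).mul_right
            ((hCNN t b).sub_right (hCNN t b).units_inv_right))
      obtain ⟨ih1, ih2⟩ := ih hi' hj'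
      rw [hqSi s t hts, Units.val_mul]
      exact ⟨(hNtEJ i j hti htj).mul_left ih1, (hNtEJ j i htj hti).mul_left ih2⟩
  -- finish by cases on i < j or j < i
  rcases lt_or_gt_of_ne hij with h | h
  · obtain ⟨c1, c2⟩ := hSEJ (Finset.Ioo i j) (by simp) (by simp)
    rw [hElt i j h, hEgt j i h]
    rw [cancel _ (EJ i j) (EJ j i) c1.eq, cancel' _ (EJ j i) (EJ i j) c2.eq]
    exact hkey i j hij
  · obtain ⟨c1, c2⟩ := hSEJ (Finset.Ioo j i) (by simp) (by simp)
    rw [hEgt i j h, hElt j i h]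
    rw [cancel' _ (EJ i j) (EJ j i) c1.eq, cancel _ (EJ j i) (EJ i j) c2.eq]
    exact hkey i j hij
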